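/- Let T be a left continuous t-norm and L a continuous L-operation on [0,∞]. Define τ_{T,L}(f,g)(x) = sup{T(f(r), g(s)) : L(r,s) ≤ x}. Then for all d.d.f.'s f, g and all x ∈ [0,∞], τ_{T,L}(f,g)(x) = sup{T(f(r), g(s)) : L(r,s) = x}. -/

import Mathlib

open ENNReal Set

/-- A distance distribution function: increasing `f : [0,∞] → [0,1]` with
`f 0 = 0`, `f ∞ = 1`, left continuous on `(0,∞)`. -/
def IsDDF (f : ℝ≥0∞ → ℝ≥0∞) : Prop :=
  Monotone f ∧ (∀ x, f x ≤ 1) ∧ f 0 = 0 ∧ f ⊤ = 1 ∧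
    ∀ x : ℝ≥0∞, 0 < x → x < ⊤ → f x = ⨆ y ∈ Set.Iio x, f y

/-- The largest quasi-inverse `f∨ y = inf {x | f x > y}`. -/
noncomputable def qInv (f : ℝ≥0∞ → ℝ≥0∞) : ℝ≥0∞ → ℝ≥0∞ :=
  fun y => sInf {x | y < f x}

/-- The unit interval `[0,1]` inside `[0,∞]`. -/
def I01 : Set ℝ≥0∞ := Set.Icc 0 1

/-- A left continuous t-norm on `[0,1]`: commutative, associative, increasing in each
place, identity `1`, left continuous in each variable. -/
def IsLeftContTNorm (T : ℝ≥0∞ → ℝ≥0∞ → ℝ≥0∞) : Prop :=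
  (∀ p ∈ I01, ∀ q ∈ I01, T p q ∈ I01) ∧
  (∀ p ∈ I01, ∀ q ∈ I01, T p q = T q p) ∧
  (∀ p ∈ I01, ∀ q ∈ I01, ∀ r ∈ I01, T (T p q) r = T p (T q r)) ∧
  (∀ p ∈ I01, T p 1 = p) ∧
  (∀ q ∈ I01, ∀ p₁ ∈ I01, ∀ p₂ ∈ I01, p₁ ≤ p₂ → T p₁ q ≤ T p₂ q) ∧
  (∀ q ∈ I01, ∀ p ∈ I01, 0 < p → T p q = ⨆ p' ∈ Set.Iio p, T p' q)

/-- A right continuous `L`-operation on `[0,∞]`: commutative, associative, increasing in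
each place, identity `0`, right continuous in each variable. -/
def IsRightContLOp (L : ℝ≥0∞ → ℝ≥0∞ → ℝ≥0∞) : Prop :=
  (∀ x y, L x y = L y x) ∧
  (∀ x y z, L (L x y) z = L x (L y z)) ∧
  (∀ x, L x 0 = x) ∧
  (∀ y x₁ x₂, x₁ ≤ x₂ → L x₁ y ≤ L x₂ y) ∧
  (∀ y x, x < ⊤ → L x y = ⨅ x' ∈ Set.Ioi x, L x' y)

/-- Joint continuity of a t-norm on `[0,1] × [0,1]`. -/
def TNormContinuous (T : ℝ≥0∞ → ℝ≥0∞ → ℝ≥0∞) : Prop :=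
  ContinuousOn (fun pq : ℝ≥0∞ × ℝ≥0∞ => T pq.1 pq.2) (I01 ×ˢ I01)

/-- The tensor-product triangle function:
`(L ⊗ T)(f,g)(x) = sup {T (f r) (g s) | L r s < x}` for `x < ∞`, and `1` at `∞`. -/
noncomputable def tensor (L T : ℝ≥0∞ → ℝ≥0∞ → ℝ≥0∞) (f g : ℝ≥0∞ → ℝ≥0∞) :
    ℝ≥0∞ → ℝ≥0∞ :=
  fun x => if x = ⊤ then 1 else ⨆ r, ⨆ s, ⨆ _ : L r s < x, T (f r) (g s)

/-- `τ_{T,L}(f,g)(x) = sup {T (f r) (g s) | L r s ≤ x}`. -/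
noncomputable def tauTL (L T : ℝ≥0∞ → ℝ≥0∞ → ℝ≥0∞) (f g : ℝ≥0∞ → ℝ≥0∞) :
    ℝ≥0∞ → ℝ≥0∞ :=
  fun x => ⨆ r, ⨆ s, ⨆ _ : L r s ≤ x, T (f r) (g s)

theorem tau_eq_sup_on_level_sets (T L : ℝ≥0∞ → ℝ≥0∞ → ℝ≥0∞)
    (hT : IsLeftContTNorm T) (hL : IsRightContLOp L)
    (hLc : Continuous (fun xy : ℝ≥0∞ × ℝ≥0∞ => L xy.1 xy.2))
    (f g : ℝ≥0∞ → ℝ≥0∞) (hf : IsDDF f) (hg : IsDDF g) :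
    ∀ x : ℝ≥0∞, tauTL L T f g x = ⨆ r, ⨆ s, ⨆ _ : L r s = x, T (f r) (g s) := by
  intro x
  obtain ⟨hcomm, hassoc, hid, hmono, _⟩ := hL
  obtain ⟨_, hTcomm, _, _, hTmono, _⟩ := hT
  have hfI : ∀ y, f y ∈ I01 := fun y => ⟨zero_le, hf.2.1 y⟩
  have hgI : ∀ y, g y ∈ I01 := fun y => ⟨zero_le, hg.2.1 y⟩
  apply le_antisymm
  · refine iSup_le fun r => iSup_le fun s => iSup_le fun hrs => ?_
    have htop : L ⊤ ⊤ = ⊤ := by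
      have h := hmono ⊤ 0 ⊤ le_top
      rw [hcomm 0 ⊤, hid] at h
      exact top_unique h
    have hc : ContinuousOn (fun t => L (max r t) (max s t)) (Icc 0 ⊤) :=
      (hLc.comp ((continuous_const.max continuous_id).prodMk (continuous_const.max continuous_id))).continuousOn
    have hx : x ∈ Icc (L (max r 0) (max s 0)) (L (max r ⊤) (max s ⊤)) := by
      simp only [max_eq_left (zero_le (a := r)), max_eq_left (zero_le (a := s)),
        max_eq_right (le_top (a := r)), max_eq_right (le_top (a := s)), htop]
      exact ⟨hrs, le_top⟩
    obtain ⟨t, _, ht⟩ := intermediate_value_Icc (zero_le (a := (⊤ : ℝ≥0∞))) hc hx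
    have h1 : T (f r) (g s) ≤ T (f (max r t)) (g s) :=
      hTmono (g s) (hgI s) (f r) (hfI r) (f _) (hfI _) (hf.1 (le_max_left r t))
    have h2 : T (f (max r t)) (g s) ≤ T (f (max r t)) (g (max s t)) := by
      rw [hTcomm _ (hfI _) _ (hgI _), hTcomm _ (hfI _) _ (hgI _)]
      exact hTmono _ (hfI _) _ (hgI _) _ (hgI _) (hg.1 (le_max_left s t))
    calc T (f r) (g s) ≤ T (f (max r t)) (g (max s t)) := h1.trans h2
      _ ≤ _ := le_iSup_of_le (max r t) (le_iSup_of_le (max s t)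
          (le_iSup (fun _ : L (max r t) (max s t) = x => T (f (max r t)) (g (max s t))) ht))
  · refine iSup_le fun r => iSup_le fun s => iSup_le fun heq => ?_
    exact le_iSup_of_le r (le_iSup_of_le s (le_iSup (fun _ : L r s ≤ x => T (f r) (g s)) heq.le))
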